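/- Every divisor method satisfies resource-monotonicity (adding an extra item never decreases any agent's utility in the produced allocation) and population-monotonicity (adding an extra agent never increases the utility of any of the original agents in the produced allocation); moreover, when there are two agents, every divisor method satisfies weight-monotonicity (increasing an agent's weight never decreases that agent's utility in the produced allocation). -/

import Mathlib

open Finset

/-- The favorite item of an agent with item-utility function `u` among a remaining
set `R` of items: a highest-valued item, ties broken in favor of the lower-numbered item. -/
noncomputable def favorite {m : ℕ} (u : Fin m → ℝ) (R : Finset (Fin m)) : Option (Fin m) :=
  if h : (R.filter fun j => ∀ j' ∈ R, u j' ≤ u j).Nonempty then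
    some ((R.filter fun j => ∀ j' ∈ R, u j' ≤ u j).min' h)
  else none

/-- One step of the picking process: agent `a` picks her favorite remaining item. -/
noncomputable def pickStep {n m : ℕ} (u : Fin n → Fin m → ℝ)
    (st : Finset (Fin m) × (Fin n → Finset (Fin m))) (a : Fin n) :
    Finset (Fin m) × (Fin n → Finset (Fin m)) :=
  match favorite (u a) st.1 with
  | none => st
  | some j => (st.1.erase j, Function.update st.2 a (insert j (st.2 a)))

/-- The allocation produced by letting agents pick their favorite remaining items
in the order given by the picking sequence `π`. -/
noncomputable def allocate {n m : ℕ} (u : Fin n → Fin m → ℝ) (π : List (Fin n)) :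
    Fin n → Finset (Fin m) :=
  (π.foldl (pickStep u) (Finset.univ, fun _ => ∅)).2

/-- A divisor method is given by a strictly increasing `f : ℕ → ℝ` with `t ≤ f t ≤ t + 1`. -/
def IsDivisorFn (f : ℕ → ℝ) : Prop :=
  StrictMono f ∧ ∀ t : ℕ, (t : ℝ) ≤ f t ∧ f t ≤ t + 1

/-- `π` is the picking sequence induced by the divisor method with function `f` and
weights `w`: each pick goes to an agent minimizing `f t_i / w_i` (where `t_i` is the
number of picks agent `i` has received so far), ties broken toward lower-numbered agents. -/
def IsDivisorSeq {n : ℕ} (f : ℕ → ℝ) (w : Fin n → ℝ) (π : List (Fin n)) : Prop :=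
  ∀ (k : ℕ) (hk : k < π.length) (i : Fin n),
    f ((π.take k).count (π.get ⟨k, hk⟩)) / w (π.get ⟨k, hk⟩) ≤
      f ((π.take k).count i) / w i ∧
    (i < π.get ⟨k, hk⟩ →
      f ((π.take k).count (π.get ⟨k, hk⟩)) / w (π.get ⟨k, hk⟩) <
        f ((π.take k).count i) / w i)

section Fav
variable {m : ℕ} {u : Fin m → ℝ} {R S : Finset (Fin m)} {g d : Fin m}

lemma favorite_eq_some_iff :
    favorite u R = some g ↔
      g ∈ R ∧ (∀ z ∈ R, u z ≤ u g) ∧ ∀ y ∈ R, (∀ z ∈ R, u z ≤ u y) → g ≤ y := by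
  unfold favorite
  split
  · rename_i h
    constructor
    · rintro hg
      have hmem := Finset.min'_mem _ h
      rw [Option.some_inj] at hg
      subst hg
      simp only [Finset.mem_filter] at hmem
      refine ⟨hmem.1, hmem.2, ?_⟩
      intro y hy hyb
      exact Finset.min'_le _ _ (Finset.mem_filter.mpr ⟨hy, hyb⟩)
    · rintro ⟨h1, h2, h3⟩
      have hgf : g ∈ R.filter fun j => ∀ j' ∈ R, u j' ≤ u j := Finset.mem_filter.mpr ⟨h1, h2⟩
      have hmin := Finset.min'_mem _ h
      simp only [Finset.mem_filter] at hmin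
      have := h3 _ hmin.1 hmin.2
      have h4 := Finset.min'_le _ _ hgf
      rw [le_antisymm h4 this]
  · rename_i h
    constructor
    · intro hg; exact nomatch hg
    · rintro ⟨h1, h2, -⟩
      exact absurd ⟨g, Finset.mem_filter.mpr ⟨h1, h2⟩⟩ h

lemma favorite_mem (h : favorite u R = some g) : g ∈ R := (favorite_eq_some_iff.mp h).1
lemma favorite_le (h : favorite u R = some g) : ∀ z ∈ R, u z ≤ u g := (favorite_eq_some_iff.mp h).2.1

lemma favorite_empty : favorite u (∅ : Finset (Fin m)) = none := by
  unfold favorite; simp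

lemma favorite_of_nonempty (h : R.Nonempty) : ∃ g, favorite u R = some g := by
  obtain ⟨b, hb, hb2⟩ := Finset.exists_max_image R u h
  unfold favorite
  rw [dif_pos ⟨b, Finset.mem_filter.mpr ⟨hb, hb2⟩⟩]
  exact ⟨_, rfl⟩

lemma favorite_none (h : favorite u R = none) : R = ∅ := by
  by_contra hne
  obtain ⟨g, hg⟩ := favorite_of_nonempty (Finset.nonempty_iff_ne_empty.mpr hne) (u := u)
  rw [h] at hg; exact nomatch hg

lemma favorite_subset (h : favorite u R = some g) (hSR : S ⊆ R) (hgS : g ∈ S) :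
    favorite u S = some g := by
  rw [favorite_eq_some_iff] at h ⊢
  exact ⟨hgS, fun z hz => h.2.1 z (hSR hz),
    fun y hy hyb => h.2.2 y (hSR hy) (fun z hz => le_trans (h.2.1 z hz) (hyb g hgS))⟩

lemma favorite_insert (h : favorite u R = some g) (d : Fin m) :
    favorite u (insert d R) = some d ∨ favorite u (insert d R) = some g := by
  have hne : (insert d R).Nonempty := Finset.insert_nonempty _ _
  obtain ⟨y, hy⟩ := favorite_of_nonempty hne (u := u)
  by_cases hyd : y = d
  · left; rw [hy, hyd]
  · right
    have hyR : y ∈ R := by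
      have := favorite_mem hy
      rw [Finset.mem_insert] at this
      tauto
    have h1 : u y ≤ u g := favorite_le h y hyR
    have h2 : u g ≤ u y := favorite_le hy g (Finset.mem_insert_of_mem (favorite_mem h))
    have heq : u y = u g := le_antisymm h1 h2
    have hgy : g ≤ y := (favorite_eq_some_iff.mp h).2.2 y hyR
      (fun z hz => le_trans (favorite_le h z hz) heq.symm.le)
    have hyg : y ≤ g := (favorite_eq_some_iff.mp hy).2.2 g
      (Finset.mem_insert_of_mem (favorite_mem h))
      (by
        intro z hz
        rw [Finset.mem_insert] at hz
        rcases hz with rfl | hz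
        · exact le_trans (favorite_le hy z (Finset.mem_insert_self _ _)) heq.le
        · exact favorite_le h z hz)
    rw [hy, le_antisymm hyg hgy]
end Fav

noncomputable def gain {n m : ℕ} (u : Fin n → Fin m → ℝ) (i : Fin n) :
    List (Fin n) → Finset (Fin m) → ℝ
  | [], _ => 0
  | a :: σ, R =>
    match favorite (u a) R with
    | none => gain u i σ R
    | some g => (if a = i then u i g else 0) + gain u i σ (R.erase g)

section Gain
variable {n m : ℕ} {u : Fin n → Fin m → ℝ} {i a : Fin n} {R : Finset (Fin m)}
  {g : Fin m} {σ τ : List (Fin n)}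

@[simp] lemma gain_nil : gain u i [] R = 0 := rfl

lemma gain_cons_none (h : favorite (u a) R = none) :
    gain u i (a :: σ) R = gain u i σ R := by
  rw [gain, h]

lemma gain_cons_some (h : favorite (u a) R = some g) :
    gain u i (a :: σ) R = (if a = i then u i g else 0) + gain u i σ (R.erase g) := by
  rw [gain, h]

lemma gain_nonneg (hu : ∀ x, 0 ≤ u i x) : ∀ (σ : List (Fin n)) (R), 0 ≤ gain u i σ R := by
  intro σ
  induction σ with
  | nil => intro R; simp
  | cons a σ ih =>
    intro R
    rcases hfav : favorite (u a) R with - | g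
    · rw [gain_cons_none hfav]; exact ih R
    · rw [gain_cons_some hfav]
      have : (0:ℝ) ≤ if a = i then u i g else 0 := by
        split <;> simp [hu]
      exact add_nonneg this (ih _)

lemma gain_empty : ∀ (σ : List (Fin n)), gain u i σ (∅ : Finset (Fin m)) = 0 := by
  intro σ
  induction σ with
  | nil => simp
  | cons a σ ih => rw [gain_cons_none favorite_empty]; exact ih

/-- remaining pool after a run -/
noncomputable def rem {n m : ℕ} (u : Fin n → Fin m → ℝ) :
    List (Fin n) → Finset (Fin m) → Finset (Fin m)
  | [], R => R
  | a :: σ, R =>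
    match favorite (u a) R with
    | none => rem u σ R
    | some g => rem u σ (R.erase g)

lemma gain_append : ∀ (σ τ : List (Fin n)) (R),
    gain u i (σ ++ τ) R = gain u i σ R + gain u i τ (rem u σ R) := by
  intro σ
  induction σ with
  | nil => intro τ R; simp [rem]
  | cons a σ ih =>
    intro τ R
    rcases hfav : favorite (u a) R with - | g
    · rw [List.cons_append, gain_cons_none hfav, gain_cons_none hfav, ih, rem, hfav]
    · rw [List.cons_append, gain_cons_some hfav, gain_cons_some hfav, ih, rem, hfav]
      ring

lemma gain_take_le (hu : ∀ x, 0 ≤ u i x) (k : ℕ) (σ : List (Fin n)) (R) :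
    gain u i (σ.take k) R ≤ gain u i σ R := by
  conv_rhs => rw [← List.take_append_drop k σ]
  rw [gain_append]
  exact le_add_of_nonneg_right (gain_nonneg hu _ _)

lemma gain_append_mono {σ₁ σ₂ : List (Fin n)}
    (h : ∀ R, gain u i σ₂ R ≤ gain u i σ₁ R) :
    ∀ (α : List (Fin n)) (R), gain u i (α ++ σ₂) R ≤ gain u i (α ++ σ₁) R := by
  intro α
  induction α with
  | nil => intro R; exact h R
  | cons a α ih =>
    intro R
    rcases hfav : favorite (u a) R with - | g
    · rw [List.cons_append, List.cons_append, gain_cons_none hfav, gain_cons_none hfav]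
      exact ih R
    · rw [List.cons_append, List.cons_append, gain_cons_some hfav, gain_cons_some hfav]
      exact add_le_add le_rfl (ih _)

lemma pickStep_none (st : Finset (Fin m) × (Fin n → Finset (Fin m)))
    (h : favorite (u a) st.1 = none) : pickStep u st a = st := by
  rw [pickStep, h]

lemma pickStep_some (st : Finset (Fin m) × (Fin n → Finset (Fin m)))
    (h : favorite (u a) st.1 = some g) :
    pickStep u st a = (st.1.erase g, Function.update st.2 a (insert g (st.2 a))) := by
  rw [pickStep, h]

lemma sum_foldl : ∀ (σ : List (Fin n)) (st : Finset (Fin m) × (Fin n → Finset (Fin m))),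
    Disjoint (st.2 i) st.1 →
    ∑ x ∈ (σ.foldl (pickStep u) st).2 i, u i x = (∑ x ∈ st.2 i, u i x) + gain u i σ st.1 := by
  intro σ
  induction σ with
  | nil => intro st _; simp
  | cons a σ ih =>
    intro st hd
    rw [List.foldl_cons]
    rcases hfav : favorite (u a) st.1 with - | g
    · rw [pickStep_none st hfav, gain_cons_none hfav, ih st hd]
    · rw [pickStep_some st hfav, gain_cons_some hfav]
      have hgR : g ∈ st.1 := favorite_mem hfav
      set st' := (st.1.erase g, Function.update st.2 a (insert g (st.2 a))) with hst'
      have hd' : Disjoint (st'.2 i) st'.1 := by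
        by_cases hai : a = i
        · subst hai
          simp only [hst', Function.update_self]
          exact Finset.disjoint_left.mpr (by
            intro z hz hz'
            rcases Finset.mem_insert.mp hz with rfl | hz2
            · exact (Finset.notMem_erase _ _) hz'
            · exact (Finset.disjoint_left.mp hd hz2) (Finset.mem_of_mem_erase hz'))
        · simp only [hst', Function.update_of_ne (fun h => hai h.symm)]
          exact Finset.disjoint_left.mpr (fun z hz hz' =>
            (Finset.disjoint_left.mp hd hz) (Finset.mem_of_mem_erase hz'))
      rw [ih st' hd']
      by_cases hai : a = i
      · subst hai
        simp only [hst', Function.update_self]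
        rw [Finset.sum_insert (Finset.disjoint_left.mp hd · hgR)]
        simp only [if_true, eq_self_iff_true]
        ring
      · simp only [hst', Function.update_of_ne (fun h => hai h.symm), if_neg hai]
        ring

lemma allocate_sum (u : Fin n → Fin m → ℝ) (π : List (Fin n)) (i : Fin n) :
    ∑ x ∈ allocate u π i, u i x = gain u i π Finset.univ := by
  rw [allocate, sum_foldl π _ (by simp)]
  simp

end Gain

lemma divisor_get_eq {n : ℕ} (f : ℕ → ℝ) (w : Fin n → ℝ)
    {π π' : List (Fin n)} (h : IsDivisorSeq f w π) (h' : IsDivisorSeq f w π') :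
    ∀ (k) (hk : k < π.length) (hk' : k < π'.length), π.get ⟨k, hk⟩ = π'.get ⟨k, hk'⟩ := by
  intro k
  induction k using Nat.strong_induction_on with
  | _ k ih =>
    intro hk hk'
    have htake : π.take k = π'.take k := by
      apply List.ext_get
      · simp only [List.length_take]; omega
      · intro j hj1 hj2
        have hj : j < k := by simp only [List.length_take] at hj1; omega
        have := ih j hj (by omega) (by omega)
        simp only [List.get_eq_getElem, List.getElem_take] at this ⊢
        exact this
    by_contra hab
    have s1 := (h k hk (π'.get ⟨k, hk'⟩)).1
    have s1' := (h k hk (π'.get ⟨k, hk'⟩)).2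
    have s2 := (h' k hk' (π.get ⟨k, hk⟩)).1
    have s2' := (h' k hk' (π.get ⟨k, hk⟩)).2
    rw [htake] at s1 s1'
    rcases lt_or_gt_of_ne (show π.get ⟨k, hk⟩ ≠ π'.get ⟨k, hk'⟩ from hab) with hlt | hgt
    · have := s2' hlt; linarith
    · have := s1' hgt; linarith

lemma univ_fin_succ (m : ℕ) :
    (Finset.univ : Finset (Fin (m+1))) =
      insert (Fin.last m) ((Finset.univ : Finset (Fin m)).image Fin.castSucc) := by
  ext x
  simp only [Finset.mem_univ, true_iff, Finset.mem_insert, Finset.mem_image]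
  by_cases hx : x = Fin.last m
  · left; exact hx
  · right; exact ⟨x.castPred hx, by simp [Fin.castSucc_castPred x hx]⟩

lemma favorite_image_castSucc {m : ℕ} {v : Fin (m+1) → ℝ} {R : Finset (Fin m)} {g : Fin m}
    (h : favorite (fun y => v y.castSucc) R = some g) :
    favorite v (R.image Fin.castSucc) = some g.castSucc := by
  rw [favorite_eq_some_iff] at h ⊢
  obtain ⟨h1, h2, h3⟩ := h
  refine ⟨Finset.mem_image_of_mem _ h1, ?_, ?_⟩
  · intro z hz
    obtain ⟨z', hz', rfl⟩ := Finset.mem_image.mp hz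
    exact h2 z' hz'
  · intro y hy hyb
    obtain ⟨y', hy', rfl⟩ := Finset.mem_image.mp hy
    have : g ≤ y' := h3 y' hy' (fun z hz => hyb _ (Finset.mem_image_of_mem _ hz))
    exact Fin.castSucc_le_castSucc_iff.mpr this

lemma gain_resource {n m : ℕ} (u : Fin n → Fin (m+1) → ℝ) (hu : ∀ i j, 0 ≤ u i j) :
    ∀ (σ : List (Fin n)) (R : Finset (Fin m)) (d : Fin (m+1)),
      d ∉ R.image Fin.castSucc → ∀ i,
      gain (fun a y => u a y.castSucc) i σ R ≤ gain u i σ (insert d (R.image Fin.castSucc)) := by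
  intro σ
  induction σ with
  | nil => intro R d _ i; simp
  | cons b σ ih =>
    intro R d hd i
    rcases R.eq_empty_or_nonempty with rfl | hne
    · rw [gain_empty]
      exact gain_nonneg (hu i) _ _
    · obtain ⟨g, hg0⟩ := favorite_of_nonempty hne (u := fun y => u b y.castSucc)
      have hg : favorite ((fun a (y : Fin m) => u a y.castSucc) b) R = some g := hg0
      have hgR : g ∈ R := favorite_mem hg0
      have hbig : favorite (u b) (R.image Fin.castSucc) = some g.castSucc :=
        favorite_image_castSucc hg0
      have hcs : g.castSucc ∈ R.image Fin.castSucc := Finset.mem_image_of_mem _ hgR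
      have hdg : g.castSucc ≠ d := fun h => hd (h ▸ hcs)
      have himge : ((R.erase g).image Fin.castSucc) = (R.image Fin.castSucc).erase g.castSucc :=
        Finset.image_erase (Fin.castSucc_injective m) R g
      have hgainL : gain (fun a (y : Fin m) => u a y.castSucc) i (b :: σ) R =
          (if b = i then u i g.castSucc else 0) +
            gain (fun a (y : Fin m) => u a y.castSucc) i σ (R.erase g) :=
        gain_cons_some (u := fun a (y : Fin m) => u a y.castSucc) hg
      rcases favorite_insert hbig d with hP | hP
      · -- big run picks d
        rw [hgainL, gain_cons_some hP]
        have hpool : (insert d (R.image Fin.castSucc)).erase d = R.image Fin.castSucc :=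
          Finset.erase_insert hd
        have himg : R.image Fin.castSucc = insert g.castSucc ((R.erase g).image Fin.castSucc) := by
          rw [himge, Finset.insert_erase hcs]
        have hnotin : g.castSucc ∉ (R.erase g).image Fin.castSucc := by
          rw [himge]; exact Finset.notMem_erase _ _
        have hterm : (if b = i then u i g.castSucc else 0) ≤ (if b = i then u i d else 0) := by
          by_cases hbi : b = i
          · subst hbi
            simp only [if_pos rfl]
            exact favorite_le hP g.castSucc (Finset.mem_insert_of_mem hcs)
          · simp [hbi]
        rw [hpool, himg]
        exact add_le_add hterm (ih (R.erase g) g.castSucc hnotin i)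
      · -- big run picks g.castSucc
        rw [hgainL, gain_cons_some hP]
        have hpool : (insert d (R.image Fin.castSucc)).erase g.castSucc =
            insert d ((R.erase g).image Fin.castSucc) := by
          rw [himge]
          ext z
          simp only [Finset.mem_erase, Finset.mem_insert]
          constructor
          · rintro ⟨hz1, rfl | hz2⟩
            · exact Or.inl rfl
            · exact Or.inr ⟨hz1, hz2⟩
          · rintro (rfl | ⟨hz1, hz2⟩)
            · exact ⟨(Ne.symm hdg), Or.inl rfl⟩
            · exact ⟨hz1, Or.inr hz2⟩
        have hd' : d ∉ (R.erase g).image Fin.castSucc := by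
          rw [himge]
          exact fun hz => hd (Finset.mem_of_mem_erase hz)
        have hterm : (if b = i then u i g.castSucc else 0) ≤ (if b = i then u i g.castSucc else 0) :=
          le_rfl
        rw [hpool]
        exact add_le_add hterm (ih (R.erase g) d hd' i)

lemma last_not_mem_image (m : ℕ) :
    Fin.last m ∉ (Finset.univ : Finset (Fin m)).image Fin.castSucc := by
  simp only [Finset.mem_image, Finset.mem_univ, true_and]
  rintro ⟨y, hy⟩
  exact absurd hy (Fin.castSucc_lt_last y).ne

lemma resource_mono (f : ℕ → ℝ) (hf : IsDivisorFn f) (n m : ℕ) (w : Fin n → ℝ)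
    (hw : ∀ i, 0 < w i)
    (π π' : List (Fin n)) (hπ : π.length = m) (hπ' : π'.length = m + 1)
    (hs : IsDivisorSeq f w π) (hs' : IsDivisorSeq f w π')
    (u : Fin n → Fin (m + 1) → ℝ) (hu : ∀ i j, 0 ≤ u i j) (i : Fin n) :
    (∑ x ∈ allocate (fun a (y : Fin m) => u a y.castSucc) π i, u i x.castSucc) ≤
      ∑ x ∈ allocate u π' i, u i x := by
  have hpre : π'.take m = π := by
    apply List.ext_get
    · simp only [List.length_take]; omega
    · intro j h1 h2
      have hj : j < m := by simp only [List.length_take] at h1; omega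
      have := divisor_get_eq f w hs' hs j (by omega) (by omega)
      simp only [List.get_eq_getElem, List.getElem_take] at this ⊢
      exact this
  obtain ⟨b, hb⟩ : ∃ b, π'.drop m = [b] := by
    apply List.length_eq_one_iff.mp
    simp only [List.length_drop]; omega
  have hsplit : π' = π ++ [b] := by
    rw [← hpre, ← hb, List.take_append_drop]
  have LHS : (∑ x ∈ allocate (fun a (y : Fin m) => u a y.castSucc) π i, u i x.castSucc) =
      gain (fun a (y : Fin m) => u a y.castSucc) i π Finset.univ :=
    allocate_sum _ π i
  rw [LHS, allocate_sum u π' i, hsplit, gain_append]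
  have h1 : gain (fun a (y : Fin m) => u a y.castSucc) i π Finset.univ ≤
      gain u i π Finset.univ := by
    have := gain_resource u hu π Finset.univ (Fin.last m) (last_not_mem_image m) i
    rwa [← univ_fin_succ] at this
  have h2 : 0 ≤ gain u i [b] (rem u π Finset.univ) := gain_nonneg (hu i) _ _
  linarith

def toOld {n : ℕ} (a : Fin (n+1)) : Option (Fin n) :=
  if h : a.val < n then some ⟨a.val, h⟩ else none

lemma toOld_castSucc {n : ℕ} (x : Fin n) : toOld x.castSucc = some x := by
  unfold toOld
  rw [dif_pos (by simpa using x.isLt)]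
  exact congrArg some (Fin.ext (by simp))

lemma toOld_eq_some {n : ℕ} {a : Fin (n+1)} {x : Fin n} (h : toOld a = some x) :
    a = x.castSucc := by
  unfold toOld at h
  split at h
  · injection h with h'
    exact Fin.ext (by rw [← h']; simp)
  · exact nomatch h

lemma count_filterMap_toOld {n : ℕ} :
    ∀ (σ : List (Fin (n+1))) (x : Fin n),
      (σ.filterMap toOld).count x = σ.count x.castSucc := by
  intro σ x
  induction σ with
  | nil => simp
  | cons a σ ih =>
    rw [List.filterMap_cons]
    rcases h : toOld a with - | y
    · have hne : x.castSucc ≠ a := by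
        intro he; rw [← he, toOld_castSucc] at h; exact nomatch h
      rw [List.count_cons_of_ne (Ne.symm hne)]
      exact ih
    · have hay : a = y.castSucc := toOld_eq_some h
      by_cases hyx : y = x
      · subst hyx; subst hay
        rw [List.count_cons_self, List.count_cons_self, ih]
      · have h1 : x ≠ y := Ne.symm hyx
        have h2 : x.castSucc ≠ a := by
          rw [hay]; exact fun he => h1 (Fin.castSucc_injective n he)
        rw [List.count_cons_of_ne (Ne.symm h2)]
        exact (List.count_cons_of_ne hyx).trans ih

lemma pop_prefix {n m : ℕ} (f : ℕ → ℝ) (w : Fin (n+1) → ℝ)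
    {π : List (Fin n)} {π' : List (Fin (n+1))}
    (hπ : π.length = m) (hπ' : π'.length = m)
    (hs : IsDivisorSeq f (fun i => w i.castSucc) π) (hs' : IsDivisorSeq f w π') :
    ∀ k, k ≤ m → (π'.take k).filterMap toOld =
      π.take ((π'.take k).filterMap toOld).length := by
  intro k
  induction k with
  | zero => simp
  | succ k ih =>
    intro hk1
    have hk : k < m := hk1
    have hIH := ih (le_of_lt hk)
    set L := ((π'.take k).filterMap toOld).length with hL
    have hLk : L ≤ k := by
      calc L ≤ (π'.take k).length := List.length_filterMap_le _ _
        _ ≤ k := by simp [List.length_take]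
    have hkl : k < π'.length := by omega
    have htk : π'.take (k+1) = π'.take k ++ [π'.get ⟨k, hkl⟩] := by
      rw [List.take_succ, List.getElem?_eq_getElem hkl]
      simp
    rcases hob : toOld (π'.get ⟨k, hkl⟩) with - | j
    · rw [htk, List.filterMap_append]
      simp only [List.filterMap_cons, hob, List.filterMap_nil, List.append_nil]
      exact hIH
    · have hbj : π'.get ⟨k, hkl⟩ = j.castSucc := toOld_eq_some hob
      have hcnt : ∀ x : Fin n, (π'.take k).count x.castSucc = (π.take L).count x := by
        intro x
        rw [← count_filterMap_toOld, hIH]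
      have hLm : L < m := by omega
      have hLπ : L < π.length := by omega
      have haj : π.get ⟨L, hLπ⟩ = j := by
        by_contra hne
        have s1 : f ((π.take L).count (π.get ⟨L, hLπ⟩)) / w (π.get ⟨L, hLπ⟩).castSucc ≤
            f ((π.take L).count j) / w j.castSucc := (hs L hLπ j).1
        have s1' : j < π.get ⟨L, hLπ⟩ →
            f ((π.take L).count (π.get ⟨L, hLπ⟩)) / w (π.get ⟨L, hLπ⟩).castSucc <
              f ((π.take L).count j) / w j.castSucc := (hs L hLπ j).2
        have s2 : f ((π'.take k).count (π'.get ⟨k, hkl⟩)) / w (π'.get ⟨k, hkl⟩) ≤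
            f ((π'.take k).count (π.get ⟨L, hLπ⟩).castSucc) / w (π.get ⟨L, hLπ⟩).castSucc :=
          (hs' k hkl (π.get ⟨L, hLπ⟩).castSucc).1
        have s2' : (π.get ⟨L, hLπ⟩).castSucc < π'.get ⟨k, hkl⟩ →
            f ((π'.take k).count (π'.get ⟨k, hkl⟩)) / w (π'.get ⟨k, hkl⟩) <
              f ((π'.take k).count (π.get ⟨L, hLπ⟩).castSucc) / w (π.get ⟨L, hLπ⟩).castSucc :=
          (hs' k hkl (π.get ⟨L, hLπ⟩).castSucc).2
        rw [hbj, hcnt, hcnt] at s2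
        rw [hbj, hcnt, hcnt] at s2'
        rcases lt_or_gt_of_ne hne with hlt | hgt
        · have := s2' (Fin.castSucc_lt_castSucc_iff.mpr hlt)
          linarith
        · have := s1' hgt
          linarith
      have hstep : π.take L ++ [j] = π.take (L + 1) := by
        rw [List.take_succ, List.getElem?_eq_getElem hLπ]
        simp only [Option.toList_some]
        congr 2
        rw [← haj]
        rfl
      rw [htk, List.filterMap_append]
      simp only [List.filterMap_cons, hob, List.filterMap_nil]
      rw [hIH, hstep]
      congr 1
      simp only [List.length_take]
      omega

lemma gain_pop {n m : ℕ} (u : Fin (n+1) → Fin m → ℝ) (hu : ∀ a b, 0 ≤ u a b) (i : Fin n) :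
    ∀ (σ : List (Fin (n+1))) (R' R : Finset (Fin m)), R' ⊆ R →
      gain u i.castSucc σ R' ≤ gain (fun a y => u a.castSucc y) i (σ.filterMap toOld) R := by
  intro σ
  induction σ with
  | nil => intro R' R _; simp
  | cons b σ ih =>
    intro R' R hsub
    rcases R'.eq_empty_or_nonempty with rfl | hne
    · rw [gain_empty]
      exact gain_nonneg (u := fun a y => u a.castSucc y) (i := i) (fun x => hu _ x) _ _
    obtain ⟨g', hg'⟩ := favorite_of_nonempty hne (u := u b)
    have hRne : R.Nonempty := hne.mono hsub
    rcases hob : toOld b with - | j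
    · simp only [List.filterMap_cons, hob]
      rw [gain_cons_some hg']
      have hbi : b ≠ i.castSucc := by
        intro he; rw [he, toOld_castSucc] at hob; exact nomatch hob
      rw [if_neg hbi, zero_add]
      exact ih (R'.erase g') R (subset_trans (Finset.erase_subset _ _) hsub)
    · have hbj : b = j.castSucc := toOld_eq_some hob
      subst hbj
      obtain ⟨g, hg⟩ := favorite_of_nonempty hRne (u := u j.castSucc)
      have hgold : favorite ((fun (a : Fin n) y => u a.castSucc y) j) R = some g := hg
      simp only [List.filterMap_cons, hob]
      rw [gain_cons_some hg',
        gain_cons_some (u := fun (a : Fin n) y => u a.castSucc y) (a := j) (i := i) hgold]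
      have hsub' : R'.erase g' ⊆ R.erase g := by
        by_cases hgR' : g ∈ R'
        · have hfs : favorite (u j.castSucc) R' = some g := favorite_subset hg hsub hgR'
          rw [hfs] at hg'
          injection hg' with hh
          rw [← hh]
          exact Finset.erase_subset_erase _ hsub
        · intro z hz
          have hz' := Finset.mem_of_mem_erase hz
          exact Finset.mem_erase.mpr ⟨fun he => hgR' (he ▸ hz'), hsub hz'⟩
      refine add_le_add ?_ (ih _ _ hsub')
      by_cases hji : j = i
      · subst hji
        rw [if_pos rfl, if_pos rfl]
        exact favorite_le hg g' (hsub (favorite_mem hg'))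
      · rw [if_neg (fun he => hji (Fin.castSucc_injective n he)), if_neg hji]

lemma pop_mono (f : ℕ → ℝ) (n m : ℕ) (w : Fin (n + 1) → ℝ)
    (π : List (Fin n)) (π' : List (Fin (n + 1))) (hπ : π.length = m) (hπ' : π'.length = m)
    (hs : IsDivisorSeq f (fun i : Fin n => w i.castSucc) π) (hs' : IsDivisorSeq f w π')
    (u : Fin (n + 1) → Fin m → ℝ) (hu : ∀ i j, 0 ≤ u i j) (i : Fin n) :
    (∑ x ∈ allocate u π' i.castSucc, u i.castSucc x) ≤
      ∑ x ∈ allocate (fun a y => u a.castSucc y) π i, u i.castSucc x := by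
  rw [allocate_sum u π' i.castSucc]
  have hrhs : (∑ x ∈ allocate (fun a y => u a.castSucc y) π i, u i.castSucc x) =
      gain (fun a y => u a.castSucc y) i π Finset.univ := allocate_sum _ π i
  rw [hrhs]
  have h2 := pop_prefix f w hπ hπ' hs hs' m le_rfl
  rw [show π'.take m = π' from by rw [← hπ']; exact List.take_length] at h2
  calc gain u i.castSucc π' Finset.univ
      ≤ gain (fun a y => u a.castSucc y) i (π'.filterMap toOld) Finset.univ :=
        gain_pop u hu i π' Finset.univ Finset.univ (subset_refl _)
    _ = gain (fun a y => u a.castSucc y) i (π.take ((π'.filterMap toOld).length)) Finset.univ := by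
        rw [← h2]
    _ ≤ gain (fun a y => u a.castSucc y) i π Finset.univ :=
        gain_take_le (u := fun a y => u a.castSucc y) (i := i) (fun x => hu _ x) _ _ _

section PartC
variable {m : ℕ} {u : Fin 2 → Fin m → ℝ}

lemma fin2_other : ∀ i : Fin 2, ∃ j : Fin 2, j ≠ i ∧ ∀ a : Fin 2, a = i ∨ a = j := by
  decide

lemma two_count (i j : Fin 2) (hji : j ≠ i) :
    ∀ (hall : ∀ a : Fin 2, a = i ∨ a = j) (l : List (Fin 2)),
      l.count i + l.count j = l.length := by
  intro hall l
  induction l with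
  | nil => simp
  | cons a t ih =>
    rcases hall a with rfl | rfl
    · rw [List.count_cons_self, List.count_cons_of_ne (Ne.symm hji), List.length_cons]
      omega
    · rw [List.count_cons_of_ne hji, List.count_cons_self, List.length_cons]
      omega

lemma gain_of_not_mem {i : Fin 2} {τ : List (Fin 2)} (h : i ∉ τ) :
    ∀ R : Finset (Fin m), gain u i τ R = 0 := by
  induction τ with
  | nil => intro R; simp
  | cons a t ih =>
    intro R
    have hne : a ≠ i := fun hai => h (hai ▸ List.mem_cons_self)
    have hit : i ∉ t := fun hit => h (List.mem_cons_of_mem a hit)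
    rcases hfav : favorite (u a) R with - | g
    · rw [gain_cons_none hfav]; exact ih hit R
    · rw [gain_cons_some hfav, if_neg hne, zero_add]; exact ih hit _

lemma exists_decomp {i j : Fin 2} (hji : j ≠ i) (hall : ∀ a : Fin 2, a = i ∨ a = j) :
    ∀ τ : List (Fin 2), i ∈ τ → ∃ p γ, τ = List.replicate p j ++ i :: γ := by
  intro τ
  induction τ with
  | nil => intro h; simp at h
  | cons a t ih =>
    intro h
    rcases hall a with rfl | rfl
    · exact ⟨0, t, by simp⟩
    · have hit : i ∈ t := by
        rcases List.mem_cons.mp h with h1 | h1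
        · exact absurd h1 (Ne.symm hji)
        · exact h1
      obtain ⟨p, γ, hdec⟩ := ih hit
      exact ⟨p + 1, γ, by rw [List.replicate_succ, List.cons_append, hdec]⟩

lemma gain_pool_swap (i j : Fin 2) (hji : j ≠ i) (hall : ∀ a : Fin 2, a = i ∨ a = j) :
    ∀ (σ : List (Fin 2)) (Q : Finset (Fin m)) (x d : Fin m), x ∉ Q → d ∉ Q → x ≠ d →
      favorite (u i) (insert x (insert d Q)) = some x →
      favorite (u j) (insert x (insert d Q)) = some d →
      gain u i σ (insert d Q) ≤ gain u i σ (insert x Q) := by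
  intro σ
  induction σ with
  | nil => intro Q x d _ _ _ _ _; simp
  | cons a σ ih =>
    intro Q x d hxQ hdQ hxd hfx hfd
    have hsub1 : insert x Q ⊆ insert x (insert d Q) := by
      intro z hz
      rcases Finset.mem_insert.mp hz with rfl | hz
      · exact Finset.mem_insert_self _ _
      · exact Finset.mem_insert_of_mem (Finset.mem_insert_of_mem hz)
    have hsub2 : insert d Q ⊆ insert x (insert d Q) := fun z hz => Finset.mem_insert_of_mem hz
    rcases hall a with rfl | rfl
    · -- the pick belongs to agent i
      have hfavP1 : favorite (u a) (insert x Q) = some x :=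
        favorite_subset hfx hsub1 (Finset.mem_insert_self _ _)
      obtain ⟨p2, hp2⟩ := favorite_of_nonempty (Finset.insert_nonempty d Q) (u := u a)
      rw [gain_cons_some hp2, gain_cons_some hfavP1, if_pos rfl, if_pos rfl,
        Finset.erase_insert hxQ]
      have hup2 : u a p2 ≤ u a x := favorite_le hfx p2 (hsub2 (favorite_mem hp2))
      rcases Finset.mem_insert.mp (favorite_mem hp2) with rfl | hp2Q
      · rw [Finset.erase_insert hdQ]
        exact add_le_add hup2 le_rfl
      · have hne_pd : p2 ≠ d := fun he => hdQ (he ▸ hp2Q)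
        have her : (insert d Q).erase p2 = insert d (Q.erase p2) := by
          ext z
          simp only [Finset.mem_erase, Finset.mem_insert]
          constructor
          · rintro ⟨h1, rfl | h2⟩
            · exact Or.inl rfl
            · exact Or.inr ⟨h1, h2⟩
          · rintro (rfl | ⟨h1, h2⟩)
            · exact ⟨Ne.symm hne_pd, Or.inl rfl⟩
            · exact ⟨h1, Or.inr h2⟩
        rw [her]
        have hset : insert p2 (insert d (Q.erase p2)) = insert d Q := by
          ext z
          simp only [Finset.mem_insert, Finset.mem_erase]
          constructor
          · rintro (rfl | rfl | ⟨h1, h2⟩)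
            · exact Or.inr hp2Q
            · exact Or.inl rfl
            · exact Or.inr h2
          · rintro (rfl | hz)
            · exact Or.inr (Or.inl rfl)
            · by_cases hzp : z = p2
              · exact Or.inl hzp
              · exact Or.inr (Or.inr ⟨hzp, hz⟩)
        have hfx' : favorite (u a) (insert p2 (insert d (Q.erase p2))) = some p2 := by
          rw [hset]; exact hp2
        have hfd' : favorite (u j) (insert p2 (insert d (Q.erase p2))) = some d := by
          rw [hset]; exact favorite_subset hfd hsub2 (Finset.mem_insert_self _ _)
        have hih := ih (Q.erase p2) p2 d (Finset.notMem_erase _ _)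
          (fun hz => hdQ (Finset.mem_of_mem_erase hz)) hne_pd hfx' hfd'
        rw [Finset.insert_erase hp2Q] at hih
        exact add_le_add hup2 hih
    · -- the pick belongs to agent j
      have hfavP2 : favorite (u a) (insert d Q) = some d :=
        favorite_subset hfd hsub2 (Finset.mem_insert_self _ _)
      obtain ⟨y1, hy1⟩ := favorite_of_nonempty (Finset.insert_nonempty x Q) (u := u a)
      rw [gain_cons_some hfavP2, gain_cons_some hy1, if_neg hji, if_neg hji,
        zero_add, zero_add, Finset.erase_insert hdQ]
      rcases Finset.mem_insert.mp (favorite_mem hy1) with rfl | hy1Q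
      · rw [Finset.erase_insert hxQ]
      · have hne_yx : y1 ≠ x := fun he => hxQ (he ▸ hy1Q)
        have her : (insert x Q).erase y1 = insert x (Q.erase y1) := by
          ext z
          simp only [Finset.mem_erase, Finset.mem_insert]
          constructor
          · rintro ⟨h1, rfl | h2⟩
            · exact Or.inl rfl
            · exact Or.inr ⟨h1, h2⟩
          · rintro (rfl | ⟨h1, h2⟩)
            · exact ⟨Ne.symm hne_yx, Or.inl rfl⟩
            · exact ⟨h1, Or.inr h2⟩
        rw [her]
        have hset : insert x (insert y1 (Q.erase y1)) = insert x Q := by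
          rw [Finset.insert_erase hy1Q]
        have hfx' : favorite (u i) (insert x (insert y1 (Q.erase y1))) = some x := by
          rw [hset]; exact favorite_subset hfx hsub1 (Finset.mem_insert_self _ _)
        have hfy' : favorite (u a) (insert x (insert y1 (Q.erase y1))) = some y1 := by
          rw [hset]; exact hy1
        have hih := ih (Q.erase y1) x y1 (fun hz => hxQ (Finset.mem_of_mem_erase hz))
          (Finset.notMem_erase _ _) (Ne.symm hne_yx) hfx' hfy'
        rw [Finset.insert_erase hy1Q] at hih
        exact hih

lemma gain_swap_head (i j : Fin 2) (hji : j ≠ i) (hall : ∀ a : Fin 2, a = i ∨ a = j)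
    (hu : ∀ x, 0 ≤ u i x) (σ : List (Fin 2)) (R : Finset (Fin m)) :
    gain u i (j :: i :: σ) R ≤ gain u i (i :: j :: σ) R := by
  rcases R.eq_empty_or_nonempty with rfl | hne
  · rw [gain_empty, gain_empty]
  obtain ⟨c1, hc1⟩ := favorite_of_nonempty hne (u := u i)
  obtain ⟨c2, hc2⟩ := favorite_of_nonempty hne (u := u j)
  by_cases hcc : c1 = c2
  · subst hcc
    rw [gain_cons_some hc2, if_neg hji, zero_add, gain_cons_some hc1, if_pos rfl]
    rcases (R.erase c1).eq_empty_or_nonempty with he | hne2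
    · rw [he, gain_empty, gain_empty]
      simpa using hu c1
    · obtain ⟨x, hx⟩ := favorite_of_nonempty hne2 (u := u i)
      obtain ⟨d, hd⟩ := favorite_of_nonempty hne2 (u := u j)
      rw [gain_cons_some hx, if_pos rfl, gain_cons_some hd, if_neg hji, zero_add]
      have hxc : u i x ≤ u i c1 := favorite_le hc1 x (Finset.mem_of_mem_erase (favorite_mem hx))
      by_cases hxd : x = d
      · subst hxd
        exact add_le_add hxc le_rfl
      · have hxS : x ∈ R.erase c1 := favorite_mem hx
        have hdS : d ∈ R.erase c1 := favorite_mem hd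
        have h1 : insert d (((R.erase c1).erase x).erase d) = (R.erase c1).erase x :=
          Finset.insert_erase (Finset.mem_erase.mpr ⟨Ne.symm hxd, hdS⟩)
        have h2 : ((R.erase c1).erase x).erase d = ((R.erase c1).erase d).erase x := by
          ext z
          simp only [Finset.mem_erase]
          tauto
        have h2' : insert x (((R.erase c1).erase x).erase d) = (R.erase c1).erase d := by
          rw [h2]
          exact Finset.insert_erase (Finset.mem_erase.mpr ⟨hxd, hxS⟩)
        have h3 : insert x (insert d (((R.erase c1).erase x).erase d)) = R.erase c1 := by
          rw [h1]
          exact Finset.insert_erase hxS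
        have hfx : favorite (u i) (insert x (insert d (((R.erase c1).erase x).erase d)))
            = some x := by rw [h3]; exact hx
        have hfd : favorite (u j) (insert x (insert d (((R.erase c1).erase x).erase d)))
            = some d := by rw [h3]; exact hd
        have hps := gain_pool_swap i j hji hall σ (((R.erase c1).erase x).erase d) x d
          (fun hz => (Finset.notMem_erase x _) (Finset.mem_of_mem_erase hz))
          (Finset.notMem_erase _ _) hxd hfx hfd
        rw [h1, h2'] at hps
        exact add_le_add hxc hps
  · have hc2' : favorite (u j) (R.erase c1) = some c2 :=
      favorite_subset hc2 (Finset.erase_subset _ _)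
        (Finset.mem_erase.mpr ⟨Ne.symm hcc, favorite_mem hc2⟩)
    have hc1' : favorite (u i) (R.erase c2) = some c1 :=
      favorite_subset hc1 (Finset.erase_subset _ _)
        (Finset.mem_erase.mpr ⟨hcc, favorite_mem hc1⟩)
    rw [gain_cons_some hc2, if_neg hji, zero_add, gain_cons_some hc1', if_pos rfl,
      gain_cons_some hc1, if_pos rfl, gain_cons_some hc2', if_neg hji, zero_add]
    have hcomm : (R.erase c2).erase c1 = (R.erase c1).erase c2 := by
      ext z; simp only [Finset.mem_erase]; tauto
    rw [hcomm]

lemma gain_bubble (i j : Fin 2) (hji : j ≠ i) (hall : ∀ a : Fin 2, a = i ∨ a = j)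
    (hu : ∀ x, 0 ≤ u i x) :
    ∀ (p : ℕ) (γ : List (Fin 2)) (R : Finset (Fin m)),
      gain u i (List.replicate p j ++ (i :: γ)) R ≤
        gain u i (i :: (List.replicate p j ++ γ)) R := by
  intro p
  induction p with
  | zero => intro γ R; simp
  | succ p ih =>
    intro γ R
    rw [List.replicate_succ, List.cons_append, List.cons_append]
    rcases hfav : favorite (u j) R with - | c
    · rw [favorite_none hfav, gain_empty, gain_empty]
    · rw [gain_cons_some hfav, if_neg hji, zero_add]
      calc gain u i (List.replicate p j ++ i :: γ) (R.erase c)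
          ≤ gain u i (i :: (List.replicate p j ++ γ)) (R.erase c) := ih γ _
        _ = gain u i (j :: i :: (List.replicate p j ++ γ)) R := by
            rw [gain_cons_some hfav, if_neg hji, zero_add]
        _ ≤ gain u i (i :: j :: (List.replicate p j ++ γ)) R :=
            gain_swap_head i j hji hall hu _ R

lemma gain_dom (i j : Fin 2) (hji : j ≠ i) (hall : ∀ a : Fin 2, a = i ∨ a = j)
    (hu : ∀ x, 0 ≤ u i x) :
    ∀ (N : ℕ) (τ τ' : List (Fin 2)) (R : Finset (Fin m)), τ.length ≤ N →
      τ.length = τ'.length → (∀ k, (τ.take k).count i ≤ (τ'.take k).count i) →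
      gain u i τ R ≤ gain u i τ' R := by
  intro N
  induction N with
  | zero =>
    intro τ τ' R hN hlen _
    have h1 : τ = [] := List.eq_nil_of_length_eq_zero (Nat.le_zero.mp hN)
    subst h1
    have h2 : τ' = [] := List.eq_nil_of_length_eq_zero hlen.symm
    subst h2
    simp
  | succ N ihN =>
    intro τ τ' R hN hlen hdom
    cases τ with
    | nil =>
      have h2 : τ' = [] := List.eq_nil_of_length_eq_zero hlen.symm
      subst h2
      simp
    | cons a t =>
      cases τ' with
      | nil => simp at hlen
      | cons b t' =>
        have hlen' : t.length = t'.length := by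
          simp only [List.length_cons] at hlen; omega
        have hNt : t.length ≤ N := by
          simp only [List.length_cons] at hN; omega
        by_cases hab : a = b
        · subst hab
          have hdom' : ∀ k, (t.take k).count i ≤ (t'.take k).count i := by
            intro k
            have hd := hdom (k + 1)
            rw [List.take_succ_cons, List.take_succ_cons, List.count_cons, List.count_cons] at hd
            omega
          rcases hfav : favorite (u a) R with - | g
          · rw [gain_cons_none hfav, gain_cons_none hfav]
            exact ihN t t' R hNt hlen' hdom'
          · rw [gain_cons_some hfav, gain_cons_some hfav]
            exact add_le_add le_rfl (ihN t t' _ hNt hlen' hdom')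
        · have hai : a = j := by
            rcases hall a with rfl | rfl
            · exfalso
              rcases hall b with rfl | rfl
              · exact hab rfl
              · have h1 := hdom 1
                rw [List.take_succ_cons, List.take_zero, List.take_succ_cons, List.take_zero,
                  List.count_cons_self, List.count_cons_of_ne (Ne.symm hab), List.count_nil] at h1
                omega
            · rfl
          have hbi : b = i := by
            rcases hall b with rfl | rfl
            · rfl
            · exact absurd hai hab
          rw [hai, hbi] at hdom ⊢
          by_cases hiin : i ∈ t
          · obtain ⟨p, γ, hdec⟩ := exists_decomp hji hall (j :: t)
              (List.mem_cons_of_mem j hiin)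
            rw [hdec]
            refine le_trans (gain_bubble i j hji hall hu p γ R) ?_
            have hlenrep : (List.replicate p j ++ γ).length = t'.length := by
              have := congrArg List.length hdec
              simp only [List.length_cons, List.length_append, List.length_replicate] at this ⊢
              omega
            have hNrep : (List.replicate p j ++ γ).length ≤ N := by
              rw [hlenrep, ← hlen']; exact hNt
            have hdom2 : ∀ k, ((List.replicate p j ++ γ).take k).count i ≤
                (t'.take k).count i := by
              intro k
              have hd := hdom (k + 1)
              rw [hdec, List.take_succ_cons, List.count_cons_self] at hd
              rw [List.take_append, List.count_append, List.take_replicate,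
                List.count_replicate, List.length_replicate] at hd ⊢
              simp only [beq_iff_eq] at hd ⊢
              rw [if_neg hji] at hd ⊢
              by_cases hkp : p ≤ k
              · have h1 : k + 1 - p = (k - p) + 1 := by omega
                rw [h1, List.take_succ_cons, List.count_cons_self] at hd
                omega
              · have h1 : k - p = 0 := by omega
                rw [h1, List.take_zero, List.count_nil]
                omega
            rcases hfav : favorite (u i) R with - | g
            · rw [gain_cons_none hfav, gain_cons_none hfav]
              exact ihN _ _ _ hNrep hlenrep hdom2
            · rw [gain_cons_some hfav, gain_cons_some hfav]
              exact add_le_add le_rfl (ihN _ _ _ hNrep hlenrep hdom2)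
          · have hzero : gain u i (j :: t) R = 0 := by
              apply gain_of_not_mem
              intro hmem
              rcases List.mem_cons.mp hmem with h1 | h1
              · exact (Ne.symm hji) h1
              · exact hiin h1
            rw [hzero]
            exact gain_nonneg hu _ _

lemma count_dom (f : ℕ → ℝ) (hf : IsDivisorFn f) {M : ℕ} (w w' : Fin 2 → ℝ)
    (hw : ∀ a, 0 < w a) (i j : Fin 2) (hji : j ≠ i) (hall : ∀ a : Fin 2, a = i ∨ a = j)
    (hwi : w i < w' i) (hwj : w' j = w j)
    {π π' : List (Fin 2)} (hπ : π.length = M) (hπ' : π'.length = M)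
    (hs : IsDivisorSeq f w π) (hs' : IsDivisorSeq f w' π') :
    ∀ k, k ≤ M → (π.take k).count i ≤ (π'.take k).count i := by
  intro k
  induction k with
  | zero => simp
  | succ k ih =>
    intro hk1
    have hk : k < M := hk1
    have hIH := ih (le_of_lt hk)
    have hkπ : k < π.length := by omega
    have hkπ' : k < π'.length := by omega
    have htk : π.take (k+1) = π.take k ++ [π.get ⟨k, hkπ⟩] := by
      rw [List.take_succ, List.getElem?_eq_getElem hkπ]; simp
    have htk' : π'.take (k+1) = π'.take k ++ [π'.get ⟨k, hkπ'⟩] := by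
      rw [List.take_succ, List.getElem?_eq_getElem hkπ']; simp
    rw [htk, htk', List.count_append, List.count_append]
    have hb1 : List.count i [π.get ⟨k, hkπ⟩] ≤ 1 := by
      rw [List.count_cons, List.count_nil]
      split <;> omega
    have hb2 : 0 ≤ List.count i [π'.get ⟨k, hkπ'⟩] := Nat.zero_le _
    rcases hall (π.get ⟨k, hkπ⟩) with hgi | hgj
    · -- π picks i at turn k
      by_cases heq : (π.take k).count i = (π'.take k).count i
      · have hgeti : π'.get ⟨k, hkπ'⟩ = i := by
          by_contra hne2
          have hgj' : π'.get ⟨k, hkπ'⟩ = j := (hall _).resolve_left hne2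
          have hlen1 : (π.take k).length = k := by
            rw [List.length_take]; omega
          have hlen2 : (π'.take k).length = k := by
            rw [List.length_take]; omega
          have ht1 := two_count i j hji hall (π.take k)
          have ht2 := two_count i j hji hall (π'.take k)
          rw [hlen1] at ht1
          rw [hlen2] at ht2
          have hcj : (π.take k).count j = (π'.take k).count j := by omega
          have s1 := (hs k hkπ j).1
          have s1' := (hs k hkπ j).2
          rw [hgi] at s1 s1'
          have s2 := (hs' k hkπ' i).1
          have s2' := (hs' k hkπ' i).2
          rw [hgj'] at s2 s2'
          rw [hwj, ← heq, ← hcj] at s2 s2'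
          have hA0 : (0:ℝ) ≤ f ((π.take k).count i) :=
            le_trans (Nat.cast_nonneg _) (hf.2 _).1
          have hwi' : 0 < w' i := lt_trans (hw i) hwi
          have hkey : f ((π.take k).count i) / w' i ≤ f ((π.take k).count i) / w i := by
            rw [div_le_div_iff₀ hwi' (hw i)]
            exact mul_le_mul_of_nonneg_left hwi.le hA0
          rcases lt_or_gt_of_ne hji with hlt | hgt
          · have hstrict := s1' hlt
            linarith
          · have hstrict := s2' hgt
            linarith
        rw [hgi, hgeti, List.count_cons_self, List.count_nil]
        omega
      · have hlt : (π.take k).count i < (π'.take k).count i := lt_of_le_of_ne hIH heq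
        omega
    · -- π picks j at turn k
      rw [hgj, List.count_cons_of_ne hji, List.count_nil]
      omega

end PartC

/-- Every divisor method satisfies resource-monotonicity and
population-monotonicity; moreover, for two agents, every divisor method satisfies
weight-monotonicity. -/
theorem divisor_methods_monotone (f : ℕ → ℝ) (hf : IsDivisorFn f) :
    -- resource-monotonicity
    (∀ (n m : ℕ) (w : Fin n → ℝ), (∀ i, 0 < w i) →
      ∀ (π π' : List (Fin n)), π.length = m → π'.length = m + 1 →
        IsDivisorSeq f w π → IsDivisorSeq f w π' →
        ∀ u : Fin n → Fin (m + 1) → ℝ, (∀ i j, 0 ≤ u i j) →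
        ∀ i : Fin n,
          (∑ x ∈ allocate (fun a (y : Fin m) => u a y.castSucc) π i, u i x.castSucc) ≤
            ∑ x ∈ allocate u π' i, u i x) ∧
    -- population-monotonicity
    (∀ (n m : ℕ) (w : Fin (n + 1) → ℝ), (∀ i, 0 < w i) →
      ∀ (π : List (Fin n)) (π' : List (Fin (n + 1))), π.length = m → π'.length = m →
        IsDivisorSeq f (fun i : Fin n => w i.castSucc) π → IsDivisorSeq f w π' →
        ∀ u : Fin (n + 1) → Fin m → ℝ, (∀ i j, 0 ≤ u i j) →
        ∀ i : Fin n,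
          (∑ x ∈ allocate u π' i.castSucc, u i.castSucc x) ≤
            ∑ x ∈ allocate (fun a y => u a.castSucc y) π i, u i.castSucc x) ∧
    -- weight-monotonicity for two agents
    (∀ (m : ℕ) (w w' : Fin 2 → ℝ), (∀ i, 0 < w i) →
      ∀ i : Fin 2, w i < w' i → (∀ j, j ≠ i → w' j = w j) →
      ∀ (π π' : List (Fin 2)), π.length = m → π'.length = m →
        IsDivisorSeq f w π → IsDivisorSeq f w' π' →
        ∀ u : Fin 2 → Fin m → ℝ, (∀ a b, 0 ≤ u a b) →
          (∑ x ∈ allocate u π i, u i x) ≤ ∑ x ∈ allocate u π' i, u i x) := by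
  refine ⟨?_, ?_, ?_⟩
  · intro n m w hw π π' hπ hπ' hs hs' u hu i
    exact resource_mono f hf n m w hw π π' hπ hπ' hs hs' u hu i
  · intro n m w hw π π' hπ hπ' hs hs' u hu i
    exact pop_mono f n m w π π' hπ hπ' hs hs' u hu i
  · intro m w w' hw i hwi hwj π π' hπ hπ' hs hs' u hu
    obtain ⟨j, hji, hall⟩ := fin2_other i
    rw [allocate_sum u π i, allocate_sum u π' i]
    apply gain_dom i j hji hall (hu i) m π π' Finset.univ (le_of_eq hπ)
      (hπ.trans hπ'.symm)
    intro k
    by_cases hk : k ≤ m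
    · exact count_dom f hf w w' hw i j hji hall hwi (hwj j hji) hπ hπ' hs hs' k hk
    · have h1 : π.take k = π := List.take_of_length_le (by omega)
      have h2 : π'.take k = π' := List.take_of_length_le (by omega)
      have hm := count_dom f hf w w' hw i j hji hall hwi (hwj j hji) hπ hπ' hs hs' m le_rfl
      rw [show π.take m = π from by rw [← hπ]; exact List.take_length,
        show π'.take m = π' from by rw [← hπ']; exact List.take_length] at hm
      rw [h1, h2]
      exact hm
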